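/- arXiv:2404.12956 — 5 statements merged into one kernel-verified Lean document; each statement's English description precedes it below -/
import Mathlib

section
/- Let T ⊂ R² be the reference triangle with vertices (0,0), (1,0), (0,1), F the edge on the x-axis, and let η_F(x,y) = x(1−x−y) be the edge bubble (product of the barycentric coordinates of the two endpoints of F) and d_F(x,y) = y the barycentric coordinate of the opposite vertex. For 0 < ε ≤ 1 define η_{F,ε}(x,y) = exp(−(1/ε) y) · x(1−x−y). Then η_{F,ε} ∈ H¹(T), η_{F,ε} = η_F on ∂T, and there is a constant C independent of ε with ‖η_{F,ε}‖_{L²(T)} ≤ C ε^{1/2}. -/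
open MeasureTheory

/-- The reference triangle with vertices `(0,0)`, `(1,0)`, `(0,1)`. -/
def refTriangle : Set (EuclideanSpace ℝ (Fin 2)) :=
  {p | 0 ≤ p 0 ∧ 0 ≤ p 1 ∧ p 0 + p 1 ≤ 1}

/-- The polynomial edge bubble `η_F(x,y) = x(1-x-y)` for the bottom edge `F`. -/
noncomputable def edgeBubble (p : EuclideanSpace ℝ (Fin 2)) : ℝ :=
  p 0 * (1 - p 0 - p 1)

/-- The modified face bubble `η_{F,ε}(x,y) = exp(-y/ε) x(1-x-y)`. -/
noncomputable def expBubble (ε : ℝ) (p : EuclideanSpace ℝ (Fin 2)) : ℝ :=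
  Real.exp (-(p 1 / ε)) * (p 0 * (1 - p 0 - p 1))

/- ### Auxiliary material -/

/-- The unit box containing the triangle. -/
def refBox : Set (EuclideanSpace ℝ (Fin 2)) :=
  {p | p 0 ∈ Set.Icc (0:ℝ) 1 ∧ p 1 ∈ Set.Icc (0:ℝ) 1}

lemma cont0 : Continuous (fun p : EuclideanSpace ℝ (Fin 2) => p 0) :=
  (EuclideanSpace.proj (𝕜 := ℝ) 0).continuous

lemma cont1 : Continuous (fun p : EuclideanSpace ℝ (Fin 2) => p 1) :=
  (EuclideanSpace.proj (𝕜 := ℝ) 1).continuous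

lemma isClosed_refTriangle : IsClosed refTriangle := by
  have : refTriangle = (fun p : EuclideanSpace ℝ (Fin 2) => p 0) ⁻¹' Set.Ici 0 ∩
      ((fun p : EuclideanSpace ℝ (Fin 2) => p 1) ⁻¹' Set.Ici 0 ∩
       (fun p : EuclideanSpace ℝ (Fin 2) => p 0 + p 1) ⁻¹' Set.Iic 1) := by
    ext p; simp [refTriangle, Set.mem_Ici, Set.mem_Iic]
  rw [this]
  exact (isClosed_Ici.preimage cont0).inter ((isClosed_Ici.preimage cont1).inter
    (isClosed_Iic.preimage (cont0.add cont1)))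

lemma isClosed_refBox : IsClosed refBox := by
  have : refBox = (fun p : EuclideanSpace ℝ (Fin 2) => p 0) ⁻¹' Set.Icc 0 1 ∩
      (fun p : EuclideanSpace ℝ (Fin 2) => p 1) ⁻¹' Set.Icc 0 1 := by
    ext p; simp [refBox]
  rw [this]
  exact (isClosed_Icc.preimage cont0).inter (isClosed_Icc.preimage cont1)

lemma norm_le_of_box {p : EuclideanSpace ℝ (Fin 2)} (hp : p ∈ refBox) : ‖p‖ ≤ 2 := by
  obtain ⟨⟨h1, h2⟩, h3, h4⟩ := hp
  rw [EuclideanSpace.norm_eq]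
  have hs : (∑ i, ‖p i‖ ^ 2) = ‖p 0‖^2 + ‖p 1‖^2 := by rw [Fin.sum_univ_two]
  rw [hs]
  have e0 : ‖p 0‖ ≤ 1 := by rw [Real.norm_eq_abs, abs_le]; constructor <;> linarith
  have e1 : ‖p 1‖ ≤ 1 := by rw [Real.norm_eq_abs, abs_le]; constructor <;> linarith
  have hle : ‖p 0‖^2 + ‖p 1‖^2 ≤ 4 := by nlinarith [norm_nonneg (p 0), norm_nonneg (p 1)]
  calc Real.sqrt (‖p 0‖^2 + ‖p 1‖^2) ≤ Real.sqrt 4 := Real.sqrt_le_sqrt hle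
    _ = 2 := by rw [show (4:ℝ) = 2^2 by norm_num, Real.sqrt_sq (by norm_num)]

lemma isCompact_refBox : IsCompact refBox :=
  Metric.isCompact_of_isClosed_isBounded isClosed_refBox
    (isBounded_iff_forall_norm_le.2 ⟨2, fun _ hp => norm_le_of_box hp⟩)

lemma tri_subset_box : refTriangle ⊆ refBox := by
  rintro p ⟨h1, h2, h3⟩; exact ⟨⟨h1, by linarith⟩, h2, by linarith⟩

lemma isCompact_refTriangle : IsCompact refTriangle :=
  isCompact_refBox.of_isClosed_subset isClosed_refTriangle tri_subset_box

lemma frontier_cases {p : EuclideanSpace ℝ (Fin 2)} (hp : p ∈ frontier refTriangle) :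
    p ∈ refTriangle ∧ (p 1 = 0 ∨ p 0 = 0 ∨ p 0 + p 1 = 1) := by
  have hmem : p ∈ refTriangle := by
    have := hp.1
    rwa [isClosed_refTriangle.closure_eq] at this
  refine ⟨hmem, ?_⟩
  by_contra h
  push_neg at h
  obtain ⟨h1, h2, h3⟩ := h
  obtain ⟨g1, g2, g3⟩ := hmem
  have hU : IsOpen {q : EuclideanSpace ℝ (Fin 2) | 0 < q 0 ∧ 0 < q 1 ∧ q 0 + q 1 < 1} := by
    have : {q : EuclideanSpace ℝ (Fin 2) | 0 < q 0 ∧ 0 < q 1 ∧ q 0 + q 1 < 1}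
        = (fun q : EuclideanSpace ℝ (Fin 2) => q 0) ⁻¹' Set.Ioi 0 ∩
          ((fun q : EuclideanSpace ℝ (Fin 2) => q 1) ⁻¹' Set.Ioi 0 ∩
           (fun q : EuclideanSpace ℝ (Fin 2) => q 0 + q 1) ⁻¹' Set.Iio 1) := by
      ext q; simp [Set.mem_Ioi, Set.mem_Iio]
    rw [this]
    exact (isOpen_Ioi.preimage cont0).inter ((isOpen_Ioi.preimage cont1).inter
      (isOpen_Iio.preimage (cont0.add cont1)))
  have hmemU : (0:ℝ) < p 0 ∧ 0 < p 1 ∧ p 0 + p 1 < 1 :=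
    ⟨lt_of_le_of_ne g1 (Ne.symm h2), lt_of_le_of_ne g2 (Ne.symm h1), lt_of_le_of_ne g3 h3⟩
  have hsub : {q : EuclideanSpace ℝ (Fin 2) | 0 < q 0 ∧ 0 < q 1 ∧ q 0 + q 1 < 1} ⊆ refTriangle :=
    fun q hq => ⟨hq.1.le, hq.2.1.le, hq.2.2.le⟩
  exact hp.2 (interior_maximal hsub hU hmemU)

lemma contDiff_expBubble (ε : ℝ) : ContDiff ℝ ⊤ (expBubble ε) := by
  have h0 : ContDiff ℝ ⊤ (fun p : EuclideanSpace ℝ (Fin 2) => p 0) :=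
    (EuclideanSpace.proj (𝕜 := ℝ) (0 : Fin 2)).contDiff
  have h1 : ContDiff ℝ ⊤ (fun p : EuclideanSpace ℝ (Fin 2) => p 1) :=
    (EuclideanSpace.proj (𝕜 := ℝ) (1 : Fin 2)).contDiff
  exact (Real.contDiff_exp.comp ((h1.div_const ε).neg)).mul
    (h0.mul ((contDiff_const.sub h0).sub h1))

lemma continuous_expBubble (ε : ℝ) : Continuous (expBubble ε) :=
  (contDiff_expBubble ε).continuous

lemma continuous_gradient_expBubble (ε : ℝ) :
    Continuous (fun p => gradient (expBubble ε) p) :=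
  (InnerProductSpace.toDual ℝ _).symm.continuous.comp
    ((contDiff_expBubble ε).continuous_fderiv (by norm_num))

lemma memℒp_of_continuous {E : Type*} [NormedAddCommGroup E]
    {f : EuclideanSpace ℝ (Fin 2) → E} (hf : Continuous f) :
    MemLp f 2 (volume.restrict refTriangle) := by
  haveI : IsFiniteMeasure (volume.restrict refTriangle) :=
    ⟨by rw [Measure.restrict_apply_univ]; exact isCompact_refTriangle.measure_lt_top⟩
  obtain ⟨C, hC⟩ := isCompact_refTriangle.exists_bound_of_continuousOn hf.continuousOn
  refine MemLp.of_bound hf.aestronglyMeasurable C ?_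
  exact (ae_restrict_iff' isClosed_refTriangle.measurableSet).2 (ae_of_all _ hC)

lemma box_integral_le (ε : ℝ) (hε : 0 < ε) :
    ∫ q in (Set.Icc (0:ℝ) 1 ×ˢ Set.Icc (0:ℝ) 1), Real.exp (-((2/ε) * q.2)) ≤ ε := by
  have h1 : ∫ q in (Set.Icc (0:ℝ) 1 ×ˢ Set.Icc (0:ℝ) 1), Real.exp (-((2/ε) * q.2))
      = ∫ y in Set.Icc (0:ℝ) 1, Real.exp (-((2/ε) * y)) := by
    rw [Measure.volume_eq_prod, ← Measure.prod_restrict]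
    have hg : AEStronglyMeasurable (fun y : ℝ => Real.exp (-((2/ε) * y)))
        (Measure.map Prod.snd ((volume.restrict (Set.Icc (0:ℝ) 1)).prod
          (volume.restrict (Set.Icc (0:ℝ) 1)))) :=
      (Real.continuous_exp.comp (by continuity)).aestronglyMeasurable
    rw [show (∫ q : ℝ × ℝ, Real.exp (-((2/ε) * q.2))
        ∂((volume.restrict (Set.Icc (0:ℝ) 1)).prod (volume.restrict (Set.Icc (0:ℝ) 1))))
      = ∫ y, Real.exp (-((2/ε) * y)) ∂(Measure.map Prod.snd
        ((volume.restrict (Set.Icc (0:ℝ) 1)).prod (volume.restrict (Set.Icc (0:ℝ) 1))))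
      from (integral_map measurable_snd.aemeasurable hg).symm]
    rw [Measure.map_snd_prod]
    simp [Real.volume_Icc]
  rw [h1]
  have h2 : ∫ y in Set.Icc (0:ℝ) 1, Real.exp (-((2/ε) * y))
      = ∫ y in (0:ℝ)..1, Real.exp (-((2/ε) * y)) := by
    rw [integral_Icc_eq_integral_Ioc, ← intervalIntegral.integral_of_le zero_le_one]
  rw [h2]
  have hc : (2/ε) ≠ 0 := by positivity
  have h3 : ∫ y in (0:ℝ)..1, Real.exp (-((2/ε) * y))
      = (2/ε)⁻¹ • ∫ t in ((2/ε)*0)..((2/ε)*1), Real.exp (-t) :=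
    intervalIntegral.integral_comp_mul_left (fun t => Real.exp (-t)) hc
  rw [h3]
  have h4 : ∫ t in ((2/ε)*0)..((2/ε)*1), Real.exp (-t) = 1 - Real.exp (-(2/ε)) := by
    rw [mul_zero, mul_one]
    rw [intervalIntegral.integral_comp_neg (fun t => Real.exp t)]
    rw [integral_exp]
    simp
  rw [h4]
  have := Real.exp_pos (-(2/ε))
  have h5 : (2/ε)⁻¹ = ε/2 := by field_simp
  rw [smul_eq_mul, h5]
  nlinarith

lemma box_eq_prod_integral (ε : ℝ) :
    ∫ p in refBox, Real.exp (-((2/ε) * p 1))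
      = ∫ q in (Set.Icc (0:ℝ) 1 ×ˢ Set.Icc (0:ℝ) 1), Real.exp (-((2/ε) * q.2)) := by
  have e1 := EuclideanSpace.volume_preserving_symm_measurableEquiv_toLp (Fin 2)
  have e2 := volume_preserving_finTwoArrow ℝ
  have m1 := (MeasurableEquiv.toLp 2 (Fin 2 → ℝ)).symm.measurableEmbedding
  have m2 := (MeasurableEquiv.finTwoArrow (α := ℝ)).measurableEmbedding
  have step1 : ∫ p in refBox, Real.exp (-((2/ε) * p 1))
      = ∫ x in {x : Fin 2 → ℝ | x 0 ∈ Set.Icc (0:ℝ) 1 ∧ x 1 ∈ Set.Icc (0:ℝ) 1},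
          Real.exp (-((2/ε) * x 1)) := by
    exact e1.setIntegral_preimage_emb m1
      (fun x : Fin 2 → ℝ => Real.exp (-((2/ε) * x 1)))
      {x : Fin 2 → ℝ | x 0 ∈ Set.Icc (0:ℝ) 1 ∧ x 1 ∈ Set.Icc (0:ℝ) 1}
  have step2 : ∫ x in {x : Fin 2 → ℝ | x 0 ∈ Set.Icc (0:ℝ) 1 ∧ x 1 ∈ Set.Icc (0:ℝ) 1},
          Real.exp (-((2/ε) * x 1))
      = ∫ q in (Set.Icc (0:ℝ) 1 ×ˢ Set.Icc (0:ℝ) 1), Real.exp (-((2/ε) * q.2)) := by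
    have h := e2.setIntegral_preimage_emb m2
      (fun q : ℝ × ℝ => Real.exp (-((2/ε) * q.2)))
      (Set.Icc (0:ℝ) 1 ×ˢ Set.Icc (0:ℝ) 1)
    have hset : (MeasurableEquiv.finTwoArrow (α := ℝ)) ⁻¹' (Set.Icc (0:ℝ) 1 ×ˢ Set.Icc (0:ℝ) 1)
        = {x : Fin 2 → ℝ | x 0 ∈ Set.Icc (0:ℝ) 1 ∧ x 1 ∈ Set.Icc (0:ℝ) 1} := by
      ext x; simp [MeasurableEquiv.finTwoArrow, Set.mem_prod, Prod.le_def]; tauto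
    rw [hset] at h
    exact h
  rw [step1, step2]

lemma sq_integral_le (ε : ℝ) (hε : 0 < ε) :
    ∫ p in refTriangle, (expBubble ε p) ^ 2 ≤ ε := by
  set h : EuclideanSpace ℝ (Fin 2) → ℝ := fun p => Real.exp (-((2/ε) * p 1)) with hh
  have hcont : Continuous h := Real.continuous_exp.comp ((continuous_const.mul cont1).neg)
  have hIntBox : IntegrableOn h refBox := hcont.continuousOn.integrableOn_compact isCompact_refBox
  have hIntT : IntegrableOn h refTriangle := hIntBox.mono_set tri_subset_box
  have hIntSq : IntegrableOn (fun p => (expBubble ε p) ^ 2) refTriangle :=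
    (((continuous_expBubble ε).pow 2).continuousOn).integrableOn_compact isCompact_refTriangle
  have hpt : ∀ p ∈ refTriangle, (expBubble ε p) ^ 2 ≤ h p := by
    rintro p ⟨h1, h2, h3⟩
    have hb0 : 0 ≤ p 0 * (1 - p 0 - p 1) := mul_nonneg h1 (by linarith)
    have hb1 : p 0 * (1 - p 0 - p 1) ≤ 1 := by nlinarith
    have hb : (p 0 * (1 - p 0 - p 1)) ^ 2 ≤ 1 := by nlinarith
    have hexp : Real.exp (-(p 1 / ε)) ^ 2 = h p := by
      show Real.exp (-(p 1 / ε)) ^ 2 = Real.exp (-((2/ε) * p 1))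
      rw [sq, ← Real.exp_add]
      congr 1
      field_simp
      ring
    calc (expBubble ε p) ^ 2 = Real.exp (-(p 1 / ε)) ^ 2 * (p 0 * (1 - p 0 - p 1)) ^ 2 := by
          rw [expBubble]; ring
      _ ≤ Real.exp (-(p 1 / ε)) ^ 2 * 1 := by
          apply mul_le_mul_of_nonneg_left hb (sq_nonneg _)
      _ = h p := by rw [mul_one, hexp]
  calc ∫ p in refTriangle, (expBubble ε p) ^ 2
      ≤ ∫ p in refTriangle, h p :=
        setIntegral_mono_on hIntSq hIntT isClosed_refTriangle.measurableSet hpt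
    _ ≤ ∫ p in refBox, h p := by
        apply setIntegral_mono_set hIntBox
          (Filter.Eventually.of_forall fun p => (Real.exp_pos _).le)
          (HasSubset.Subset.eventuallyLE tri_subset_box)
    _ = ∫ q in (Set.Icc (0:ℝ) 1 ×ˢ Set.Icc (0:ℝ) 1), Real.exp (-((2/ε) * q.2)) :=
        box_eq_prod_integral ε
    _ ≤ ε := box_integral_le ε hε

/-- `η_{F,ε} ∈ H¹(T)` (it and its gradient are in `L²(T)`),
`η_{F,ε} = η_F` on `∂T`, and `‖η_{F,ε}‖_{L²(T)} ≤ C ε^{1/2}` with `C` independent of `ε`. -/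
theorem stmt_5 :
    ∃ C > 0, ∀ ε : ℝ, 0 < ε → ε ≤ 1 →
      MemLp (expBubble ε) 2 (volume.restrict refTriangle) ∧
      MemLp (fun p => gradient (expBubble ε) p) 2 (volume.restrict refTriangle) ∧
      (∀ p ∈ frontier refTriangle, expBubble ε p = edgeBubble p) ∧
      Real.sqrt (∫ p in refTriangle, (expBubble ε p) ^ 2) ≤ C * Real.sqrt ε := by
  refine ⟨1, one_pos, fun ε hε hε1 => ⟨?_, ?_, ?_, ?_⟩⟩
  · exact memℒp_of_continuous (continuous_expBubble ε)
  · exact memℒp_of_continuous (continuous_gradient_expBubble ε)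
  · intro p hp
    obtain ⟨hmem, hcases⟩ := frontier_cases hp
    rcases hcases with h | h | h
    · simp [expBubble, edgeBubble, h]
    · simp [expBubble, edgeBubble, h]
    · have : 1 - p 0 - p 1 = 0 := by linarith
      simp [expBubble, edgeBubble, this]
  · rw [one_mul]
    exact Real.sqrt_le_sqrt (sq_integral_le ε hε)
end

section
/- Let T ⊂ R² be the reference triangle with vertices (0,0), (1,0), (0,1), F the bottom edge, and for 0 < ε ≤ 1 let η̃_{F,ε}(x,y) = x(1−x−y)(1 − y/ε) for y < ε and 0 for y ≥ ε. Then there exists C independent of ε with ‖η̃_{F,ε}‖_{L²(T)} ≤ C ε^{1/2} and ‖∇η̃_{F,ε}‖_{L²(T)} ≤ C ε^{−1/2}. -/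
open MeasureTheory

/-- The piecewise polynomial modified face bubble
`η̃_{F,ε}(x,y) = x(1-x-y)(1 - y/ε)` for `y < ε`, and `0` for `y ≥ ε`. -/
noncomputable def pwBubble (ε : ℝ) (p : EuclideanSpace ℝ (Fin 2)) : ℝ :=
  if p 1 < ε then p 0 * (1 - p 0 - p 1) * (1 - p 1 / ε) else 0

/-- The (a.e. defined) gradient of `η̃_{F,ε}`: the gradient of the smooth piece
`x(1-x-y)(1-y/ε)` on the strip `{y < ε}` and `0` elsewhere. -/
noncomputable def pwBubbleGrad (ε : ℝ) (p : EuclideanSpace ℝ (Fin 2)) :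
    EuclideanSpace ℝ (Fin 2) :=
  if p 1 < ε then
    gradient (fun q : EuclideanSpace ℝ (Fin 2) => q 0 * (1 - q 0 - q 1) * (1 - q 1 / ε)) p
  else 0

set_option maxHeartbeats 1000000

lemma aux_measurableSet_strip (ε : ℝ) :
    MeasurableSet {p : EuclideanSpace ℝ (Fin 2) | p 1 < ε} := by
  have : Continuous fun p : EuclideanSpace ℝ (Fin 2) => p 1 :=
    (EuclideanSpace.proj (1 : Fin 2)).continuous
  exact measurableSet_lt this.measurable measurable_const

lemma aux_measurableSet_refTriangle : MeasurableSet refTriangle := by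
  have h0 : Continuous fun p : EuclideanSpace ℝ (Fin 2) => p 0 :=
    (EuclideanSpace.proj (0 : Fin 2)).continuous
  have h1 : Continuous fun p : EuclideanSpace ℝ (Fin 2) => p 1 :=
    (EuclideanSpace.proj (1 : Fin 2)).continuous
  exact ((measurableSet_le measurable_const h0.measurable).inter
    ((measurableSet_le measurable_const h1.measurable).inter
      (measurableSet_le (h0.add h1).measurable measurable_const)))

lemma aux_vol_box (ε : ℝ) (hε : 0 ≤ ε) :
    volume (((MeasurableEquiv.toLp 2 (Fin 2 → ℝ)).symm) ⁻¹'
      (Set.univ.pi fun i : Fin 2 => Set.Icc 0 (if i = 0 then 1 else ε))) = ENNReal.ofReal ε := by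
  rw [(EuclideanSpace.volume_preserving_symm_measurableEquiv_toLp (Fin 2)).measure_preimage
    (MeasurableSet.univ_pi fun i => measurableSet_Icc).nullMeasurableSet]
  rw [volume_pi_pi, Fin.prod_univ_two]
  simp [Real.volume_Icc]

lemma aux_grad_bound (ε : ℝ) (hε : 0 < ε) (hε1 : ε ≤ 1) (p : EuclideanSpace ℝ (Fin 2))
    (hx0 : 0 ≤ p 0) (hy0 : 0 ≤ p 1) (hsum : p 0 + p 1 ≤ 1) (hy : p 1 < ε) :
    ‖gradient (fun q : EuclideanSpace ℝ (Fin 2) =>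
      q 0 * (1 - q 0 - q 1) * (1 - q 1 / ε)) p‖ ≤ 3 / ε := by
  set f := fun q : EuclideanSpace ℝ (Fin 2) => q 0 * (1 - q 0 - q 1) * (1 - q 1 / ε) with hf
  have ha : HasFDerivAt (𝕜 := ℝ) (fun q : EuclideanSpace ℝ (Fin 2) => (q 0 : ℝ))
      ((EuclideanSpace.proj 0 : EuclideanSpace ℝ (Fin 2) →L[ℝ] ℝ)) p := by
    exact (EuclideanSpace.proj 0 : EuclideanSpace ℝ (Fin 2) →L[ℝ] ℝ).hasFDerivAt
  have hb : HasFDerivAt (𝕜 := ℝ) (fun q : EuclideanSpace ℝ (Fin 2) => (q 1 : ℝ))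
      ((EuclideanSpace.proj 1 : EuclideanSpace ℝ (Fin 2) →L[ℝ] ℝ)) p := by
    exact (EuclideanSpace.proj 1 : EuclideanSpace ℝ (Fin 2) →L[ℝ] ℝ).hasFDerivAt
  have h1 : HasFDerivAt (fun q : EuclideanSpace ℝ (Fin 2) => 1 - q 0 - q 1)
      (-(EuclideanSpace.proj 0 : EuclideanSpace ℝ (Fin 2) →L[ℝ] ℝ) - EuclideanSpace.proj 1) p := by
    exact ((ha.const_sub (1:ℝ)).sub hb)
  have h2 : HasFDerivAt (fun q : EuclideanSpace ℝ (Fin 2) => 1 - q 1 / ε)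
      (-(ε⁻¹ • (EuclideanSpace.proj 1 : EuclideanSpace ℝ (Fin 2) →L[ℝ] ℝ))) p := by
    simpa [div_eq_mul_inv, mul_comm] using ((hb.const_mul ε⁻¹).const_sub (1:ℝ))
  have hm : HasFDerivAt f ((p 0 * (1 - p 0 - p 1)) •
      -(ε⁻¹ • (EuclideanSpace.proj 1 : EuclideanSpace ℝ (Fin 2) →L[ℝ] ℝ)) +
      (1 - p 1 / ε) • ((p 0) •
        (-(EuclideanSpace.proj 0 : EuclideanSpace ℝ (Fin 2) →L[ℝ] ℝ) - EuclideanSpace.proj 1) +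
        (1 - p 0 - p 1) • (EuclideanSpace.proj 0 : EuclideanSpace ℝ (Fin 2) →L[ℝ] ℝ))) p :=
    (ha.mul h1).mul h2
  have hgrad : gradient f p = (InnerProductSpace.toDual ℝ _).symm (fderiv ℝ f p) := rfl
  rw [hgrad, LinearIsometryEquiv.norm_map, hm.fderiv]
  apply ContinuousLinearMap.opNorm_le_bound _ (by positivity)
  intro v
  have hv0 : |v 0| ≤ ‖v‖ := by
    rw [EuclideanSpace.norm_eq v, show |v 0| = Real.sqrt (‖v 0‖ ^ 2) by
      rw [Real.sqrt_sq_eq_abs]; simp]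
    exact Real.sqrt_le_sqrt (Finset.single_le_sum (f := fun j => ‖v j‖ ^ 2)
      (fun j _ => by positivity) (Finset.mem_univ 0))
  have hv1 : |v 1| ≤ ‖v‖ := by
    rw [EuclideanSpace.norm_eq v, show |v 1| = Real.sqrt (‖v 1‖ ^ 2) by
      rw [Real.sqrt_sq_eq_abs]; simp]
    exact Real.sqrt_le_sqrt (Finset.single_le_sum (f := fun j => ‖v j‖ ^ 2)
      (fun j _ => by positivity) (Finset.mem_univ 1))
  have heval : (((p 0 * (1 - p 0 - p 1)) •
      -(ε⁻¹ • (EuclideanSpace.proj 1 : EuclideanSpace ℝ (Fin 2) →L[ℝ] ℝ)) +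
      (1 - p 1 / ε) • ((p 0) •
        (-(EuclideanSpace.proj 0 : EuclideanSpace ℝ (Fin 2) →L[ℝ] ℝ) - EuclideanSpace.proj 1) +
        (1 - p 0 - p 1) • (EuclideanSpace.proj 0 : EuclideanSpace ℝ (Fin 2) →L[ℝ] ℝ))) :
        EuclideanSpace ℝ (Fin 2) →L[ℝ] ℝ) v
      = ((1 - p 1/ε) * ((1 - p 0 - p 1) - p 0)) * v 0
        + (-(p 0 * (1 - p 0 - p 1)) / ε - (1 - p 1/ε) * p 0) * v 1 := by
    simp [ContinuousLinearMap.add_apply, ContinuousLinearMap.smul_apply,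
      ContinuousLinearMap.sub_apply, ContinuousLinearMap.neg_apply, PiLp.proj_apply]
    ring
  rw [heval, Real.norm_eq_abs]
  have hx1 : p 0 ≤ 1 := by linarith
  have hdiv : p 1 / ε < 1 := (div_lt_one hε).2 hy
  have hdiv0 : 0 ≤ p 1 / ε := div_nonneg hy0 hε.le
  have hA : |(1 - p 1 / ε) * ((1 - p 0 - p 1) - p 0)| ≤ 1 := by
    rw [abs_mul]
    have h1' : |1 - p 1 / ε| ≤ 1 := abs_le.2 ⟨by linarith, by linarith⟩
    have h2' : |(1 - p 0 - p 1) - p 0| ≤ 1 := abs_le.2 ⟨by linarith, by linarith⟩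
    calc |1 - p 1 / ε| * |(1 - p 0 - p 1) - p 0| ≤ 1 * 1 :=
          mul_le_mul h1' h2' (abs_nonneg _) zero_le_one
      _ = 1 := one_mul 1
  have hone : (1:ℝ) ≤ 1 / ε := by rw [le_div_iff₀ hε]; linarith
  have hB : |(-(p 0 * (1 - p 0 - p 1)) / ε - (1 - p 1 / ε) * p 0)| ≤ 2 / ε := by
    have hxb : p 0 * (1 - p 0 - p 1) ≤ 1 := by nlinarith
    have hxb0 : 0 ≤ p 0 * (1 - p 0 - p 1) := mul_nonneg hx0 (by linarith)
    have hcx : 0 ≤ (1 - p 1 / ε) * p 0 := mul_nonneg (by linarith) hx0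
    have hcx1 : (1 - p 1 / ε) * p 0 ≤ 1 := by nlinarith
    have key : p 0 * (1 - p 0 - p 1) / ε ≤ 1 / ε := by gcongr
    have key0 : 0 ≤ p 0 * (1 - p 0 - p 1) / ε := div_nonneg hxb0 hε.le
    have hnd : -(p 0 * (1 - p 0 - p 1)) / ε = -(p 0 * (1 - p 0 - p 1) / ε) := neg_div _ _
    have h2e : (2:ℝ)/ε = 1/ε + 1/ε := by ring
    rw [abs_le]
    constructor
    · rw [hnd]; linarith
    · have : 0 ≤ 2/ε := by positivity
      rw [hnd]; linarith
  calc |(1 - p 1 / ε) * ((1 - p 0 - p 1) - p 0) * v 0 +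
        (-(p 0 * (1 - p 0 - p 1)) / ε - (1 - p 1 / ε) * p 0) * v 1|
      ≤ |(1 - p 1 / ε) * ((1 - p 0 - p 1) - p 0)| * |v 0| +
        |(-(p 0 * (1 - p 0 - p 1)) / ε - (1 - p 1 / ε) * p 0)| * |v 1| := by
        rw [← abs_mul, ← abs_mul]; exact abs_add_le _ _
    _ ≤ 1 * ‖v‖ + (2 / ε) * ‖v‖ :=
        add_le_add (mul_le_mul hA hv0 (abs_nonneg _) zero_le_one)
          (mul_le_mul hB hv1 (abs_nonneg _) (by positivity))
    _ ≤ 3 / ε * ‖v‖ := by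
        have hvn := norm_nonneg v
        have h3 : (1:ℝ) + 2 / ε ≤ 3 / ε := by
          have h32 : (3:ℝ)/ε - 2/ε = 1/ε := by ring
          linarith
        nlinarith

/-- `‖η̃_{F,ε}‖_{L²(T)} ≤ C ε^{1/2}` and `‖∇η̃_{F,ε}‖_{L²(T)} ≤ C ε^{-1/2}`
with `C` independent of `ε`. -/
theorem stmt_8 :
    ∃ C > 0, ∀ ε : ℝ, 0 < ε → ε ≤ 1 →
      Real.sqrt (∫ p in refTriangle, (pwBubble ε p) ^ 2) ≤ C * Real.sqrt ε ∧
      Real.sqrt (∫ p in refTriangle, ‖pwBubbleGrad ε p‖ ^ 2) ≤ C / Real.sqrt ε := by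
  refine ⟨3, by norm_num, fun ε hε hε1 => ?_⟩
  set S : Set (EuclideanSpace ℝ (Fin 2)) := {p | p 1 < ε} with hS
  have hSm : MeasurableSet S := aux_measurableSet_strip ε
  have hTm : MeasurableSet refTriangle := aux_measurableSet_refTriangle
  have hAm : MeasurableSet (refTriangle ∩ S) := hTm.inter hSm
  -- the strip has small volume
  have hAsub : refTriangle ∩ S ⊆ ((MeasurableEquiv.toLp 2 (Fin 2 → ℝ)).symm) ⁻¹'
      (Set.univ.pi fun i : Fin 2 => Set.Icc 0 (if i = 0 then 1 else ε)) := by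
    rintro p ⟨⟨h0, h1, h2⟩, hy⟩
    intro i _
    fin_cases i
    · show ((MeasurableEquiv.toLp 2 (Fin 2 → ℝ)).symm) p 0 ∈ Set.Icc (0:ℝ) 1
      rw [show (((MeasurableEquiv.toLp 2 (Fin 2 → ℝ)).symm) p 0) = p 0 from rfl]
      exact ⟨h0, by linarith⟩
    · show ((MeasurableEquiv.toLp 2 (Fin 2 → ℝ)).symm) p 1 ∈ Set.Icc (0:ℝ) ε
      rw [show (((MeasurableEquiv.toLp 2 (Fin 2 → ℝ)).symm) p 1) = p 1 from rfl]
      exact ⟨h1, le_of_lt hy⟩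
  have hvolA : volume (refTriangle ∩ S) ≤ ENNReal.ofReal ε :=
    (measure_mono hAsub).trans_eq (aux_vol_box ε hε.le)
  have hvol_lt : volume (refTriangle ∩ S) < ⊤ :=
    lt_of_le_of_lt hvolA ENNReal.ofReal_lt_top
  have hvolR : (volume (refTriangle ∩ S)).toReal ≤ ε :=
    ENNReal.toReal_le_of_le_ofReal hε.le hvolA
  have hsqε : (0:ℝ) ≤ Real.sqrt ε := Real.sqrt_nonneg ε
  constructor
  · -- first bound
    have hind : (fun p => pwBubble ε p ^ 2) =
        S.indicator (fun p => pwBubble ε p ^ 2) := by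
      funext p
      by_cases h : p 1 < ε
      · rw [Set.indicator_of_mem (show p ∈ S from h)]
      · rw [Set.indicator_of_notMem (show p ∉ S from h)]
        simp [pwBubble, h]
    have hres : ∫ p in refTriangle, pwBubble ε p ^ 2 =
        ∫ p in refTriangle ∩ S, pwBubble ε p ^ 2 := by
      conv_lhs => rw [hind]
      exact setIntegral_indicator hSm
    have hbound : ∀ p ∈ refTriangle ∩ S, ‖pwBubble ε p ^ 2‖ ≤ 1 := by
      rintro p ⟨⟨h0, h1, h2⟩, hy⟩
      have hy' : p 1 < ε := hy
      have hdiv : p 1 / ε < 1 := (div_lt_one hε).2 hy'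
      have hdiv0 : 0 ≤ p 1 / ε := div_nonneg h1 hε.le
      have habs : |pwBubble ε p| ≤ 1 := by
        rw [pwBubble, if_pos hy', abs_mul, abs_mul]
        have e1 : |p 0| ≤ 1 := abs_le.2 ⟨by linarith, by linarith⟩
        have e2 : |1 - p 0 - p 1| ≤ 1 := abs_le.2 ⟨by linarith, by linarith⟩
        have e3 : |1 - p 1 / ε| ≤ 1 := abs_le.2 ⟨by linarith, by linarith⟩
        calc |p 0| * |1 - p 0 - p 1| * |1 - p 1 / ε| ≤ 1 * 1 * 1 := by
              apply mul_le_mul _ e3 (abs_nonneg _) (by norm_num)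
              exact mul_le_mul e1 e2 (abs_nonneg _) zero_le_one
          _ = 1 := by norm_num
      rw [Real.norm_eq_abs, abs_pow]
      calc |pwBubble ε p| ^ 2 ≤ 1 ^ 2 :=
            pow_le_pow_left₀ (abs_nonneg _) habs 2
        _ = 1 := one_pow 2
    have hI : ∫ p in refTriangle, pwBubble ε p ^ 2 ≤ ε := by
      rw [hres]
      calc ∫ p in refTriangle ∩ S, pwBubble ε p ^ 2
          ≤ ‖∫ p in refTriangle ∩ S, pwBubble ε p ^ 2‖ := le_abs_self _
        _ ≤ 1 * (volume (refTriangle ∩ S)).toReal :=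
            norm_setIntegral_le_of_norm_le_const hvol_lt hbound
        _ ≤ ε := by rw [one_mul]; exact hvolR
    calc Real.sqrt (∫ p in refTriangle, pwBubble ε p ^ 2) ≤ Real.sqrt ε :=
          Real.sqrt_le_sqrt hI
      _ ≤ 3 * Real.sqrt ε := by linarith
  · -- gradient bound
    have hind : (fun p => ‖pwBubbleGrad ε p‖ ^ 2) =
        S.indicator (fun p => ‖pwBubbleGrad ε p‖ ^ 2) := by
      funext p
      by_cases h : p 1 < ε
      · rw [Set.indicator_of_mem (show p ∈ S from h)]
      · rw [Set.indicator_of_notMem (show p ∉ S from h)]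
        simp [pwBubbleGrad, h]
    have hres : ∫ p in refTriangle, ‖pwBubbleGrad ε p‖ ^ 2 =
        ∫ p in refTriangle ∩ S, ‖pwBubbleGrad ε p‖ ^ 2 := by
      conv_lhs => rw [hind]
      exact setIntegral_indicator hSm
    have hbound : ∀ p ∈ refTriangle ∩ S, ‖‖pwBubbleGrad ε p‖ ^ 2‖ ≤ (3 / ε) ^ 2 := by
      rintro p ⟨⟨h0, h1, h2⟩, hy⟩
      have hy' : p 1 < ε := hy
      have hle : ‖pwBubbleGrad ε p‖ ≤ 3 / ε := by
        rw [pwBubbleGrad, if_pos hy']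
        exact aux_grad_bound ε hε hε1 p h0 h1 h2 hy'
      rw [Real.norm_eq_abs, abs_of_nonneg (by positivity)]
      exact pow_le_pow_left₀ (norm_nonneg _) hle 2
    have hI : ∫ p in refTriangle, ‖pwBubbleGrad ε p‖ ^ 2 ≤ 9 / ε := by
      rw [hres]
      calc ∫ p in refTriangle ∩ S, ‖pwBubbleGrad ε p‖ ^ 2
          ≤ ‖∫ p in refTriangle ∩ S, ‖pwBubbleGrad ε p‖ ^ 2‖ := le_abs_self _
        _ ≤ (3 / ε) ^ 2 * (volume (refTriangle ∩ S)).toReal :=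
            norm_setIntegral_le_of_norm_le_const hvol_lt hbound
        _ ≤ (3 / ε) ^ 2 * ε := by
            exact mul_le_mul_of_nonneg_left hvolR (by positivity)
        _ = 9 / ε := by field_simp; ring
    have hsq9 : Real.sqrt (9 / ε) = 3 / Real.sqrt ε := by
      rw [Real.sqrt_div (by norm_num : (0:ℝ) ≤ 9) ε,
        show (9:ℝ) = 3 ^ 2 by norm_num, Real.sqrt_sq (by norm_num : (0:ℝ) ≤ 3)]
    calc Real.sqrt (∫ p in refTriangle, ‖pwBubbleGrad ε p‖ ^ 2)
        ≤ Real.sqrt (9 / ε) := Real.sqrt_le_sqrt hI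
      _ = 3 / Real.sqrt ε := hsq9
end

section
/- Let U, Λ be Hilbert spaces, a : U × U → R a bounded symmetric bilinear form that is an inner product inducing the norm of U, and b : Λ × U → R a bounded bilinear form satisfying sup_{0≠v∈U} b(μ,v)/‖v‖_U = ‖μ‖_Λ for all μ ∈ Λ. Then for every bounded linear functional f on U, the mixed problem: find (u,λ) ∈ U × Λ with a(u,v) + b(λ,v) = f(v) and b(μ,u) = 0 for all (v,μ) ∈ U × Λ, has a unique solution, and ‖u‖_U + ‖λ‖_Λ ≤ C‖f‖_{U'} with C an absolute constant. -/
open RealInnerProductSpace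

/-- abstract Brezzi well-posedness. Let `U`, `Λ` be real Hilbert spaces,
`a` a bounded symmetric bilinear form on `U` which is an inner product inducing the
norm of `U` (hence it equals the inner product of `U`), and `b` a bounded bilinear form
on `Λ × U` with `sup_{v≠0} b(μ,v)/‖v‖ = ‖μ‖` for all `μ`.  Then for every bounded
linear functional `f` on `U` the mixed problem
`a(u,v) + b(λ,v) = f(v)`, `b(μ,u) = 0` has a unique solution `(u,λ)`, and
`‖u‖ + ‖λ‖ ≤ C ‖f‖` with an absolute constant `C`. -/
theorem stmt_12 :
    ∃ C > 0,
      ∀ (U Λ : Type)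
        [NormedAddCommGroup U] [InnerProductSpace ℝ U] [CompleteSpace U]
        [NormedAddCommGroup Λ] [InnerProductSpace ℝ Λ] [CompleteSpace Λ]
        (a : U →L[ℝ] U →L[ℝ] ℝ) (b : Λ →L[ℝ] U →L[ℝ] ℝ),
        (∀ u v : U, a u v = a v u) →
        (∀ u v : U, a u v = ⟪u, v⟫) →
        (∀ μ : Λ, sSup {r : ℝ | ∃ v : U, v ≠ 0 ∧ r = b μ v / ‖v‖} = ‖μ‖) →
        ∀ f : U →L[ℝ] ℝ,
          (∃! p : U × Λ,
            (∀ v : U, a p.1 v + b p.2 v = f v) ∧ (∀ μ : Λ, b μ p.1 = 0)) ∧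
          (∀ p : U × Λ,
            ((∀ v : U, a p.1 v + b p.2 v = f v) ∧ (∀ μ : Λ, b μ p.1 = 0)) →
            ‖p.1‖ + ‖p.2‖ ≤ C * ‖f‖) := by
  refine ⟨2, by norm_num, ?_⟩
  intro U Λ _ _ _ _ _ _ a b hsymm ha hb f
  -- Step 1: operator norm of `b μ` equals `‖μ‖`.
  have hbnorm : ∀ μ : Λ, ‖b μ‖ = ‖μ‖ := by
    intro μ
    set S := {r : ℝ | ∃ v : U, v ≠ 0 ∧ r = b μ v / ‖v‖} with hS
    have hmem : ∀ v : U, v ≠ 0 → b μ v / ‖v‖ ∈ S := fun v hv => ⟨v, hv, rfl⟩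
    have hbdd : BddAbove S := by
      refine ⟨‖b μ‖, ?_⟩
      rintro r ⟨v, hv, rfl⟩
      rw [div_le_iff₀ (norm_pos_iff.2 hv)]
      exact (le_abs_self _).trans ((b μ).le_opNorm v)
    have hsup0 : 0 ≤ sSup S := (hb μ) ▸ norm_nonneg μ
    rw [← hb μ]
    apply le_antisymm
    · refine (b μ).opNorm_le_bound hsup0 fun v => ?_
      rcases eq_or_ne v 0 with rfl | hv
      · simp
      · have h1 : b μ v / ‖v‖ ≤ sSup S := le_csSup hbdd (hmem v hv)
        have h2 : b μ (-v) / ‖-v‖ ≤ sSup S := le_csSup hbdd (hmem (-v) (neg_ne_zero.2 hv))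
        rw [map_neg, norm_neg] at h2
        have hvpos : (0:ℝ) < ‖v‖ := norm_pos_iff.2 hv
        rw [div_le_iff₀ hvpos] at h1 h2
        rw [Real.norm_eq_abs, abs_le]
        constructor <;> nlinarith
    · refine Real.sSup_le ?_ (norm_nonneg _)
      rintro r ⟨v, hv, rfl⟩
      rw [div_le_iff₀ (norm_pos_iff.2 hv)]
      exact (le_abs_self _).trans ((b μ).le_opNorm v)
  -- Step 2: represent `b` via a map `B : Λ → U`, `f` via `F : U`.
  set T := (InnerProductSpace.toDual ℝ U).symm with hT
  set B : Λ →L[ℝ] U :=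
    (T.toContinuousLinearEquiv.toContinuousLinearMap).comp b with hBdef
  have hB : ∀ (μ : Λ) (v : U), ⟪B μ, v⟫ = b μ v := by
    intro μ v
    simp [hBdef, hT, InnerProductSpace.toDual_symm_apply]
  have hBnorm : ∀ μ : Λ, ‖B μ‖ = ‖μ‖ := by
    intro μ
    rw [← hbnorm μ, hBdef]
    simp
  set F : U := T f with hF
  have hFf : ∀ v : U, ⟪F, v⟫ = f v := fun v => InnerProductSpace.toDual_symm_apply
  have hFnorm : ‖F‖ = ‖f‖ := T.norm_map f
  -- Step 3: the range of B is a closed subspace.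
  set K : Submodule ℝ U := LinearMap.range (B : Λ →ₗ[ℝ] U) with hK
  have hBiso : Isometry B := AddMonoidHomClass.isometry_of_norm B hBnorm
  have hKclosed : IsClosed (K : Set U) := by
    have := hBiso.isClosedEmbedding.isClosed_range
    simpa [hK, Set.range, LinearMap.coe_range, ContinuousLinearMap.coe_coe] using this
  haveI : CompleteSpace K := hKclosed.completeSpace_coe
  -- Step 4: any solution satisfies `p.1 + B p.2 = F`, `p.1 ∈ Kᗮ`.
  have hsol : ∀ p : U × Λ,
      ((∀ v : U, a p.1 v + b p.2 v = f v) ∧ (∀ μ : Λ, b μ p.1 = 0)) →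
      p.1 + B p.2 = F ∧ p.1 ∈ Kᗮ := by
    rintro ⟨u, l⟩ ⟨h1, h2⟩
    constructor
    · have : ∀ v : U, ⟪u + B l - F, v⟫ = 0 := by
        intro v
        have := h1 v
        rw [ha, ← hB, ← hFf] at this
        rw [inner_sub_left, inner_add_left]
        linarith
      have h0 := this (u + B l - F)
      rw [inner_self_eq_zero] at h0
      exact sub_eq_zero.1 h0
    · rw [Submodule.mem_orthogonal]
      rintro w hw
      obtain ⟨μ, rfl⟩ := hw
      rw [ContinuousLinearMap.coe_coe, hB]
      exact h2 μ
  -- Step 5: existence.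
  obtain ⟨w, hwK, z, hzK, hFdec⟩ := K.exists_add_mem_mem_orthogonal F
  obtain ⟨l0, rfl⟩ := hwK
  have hsol0 : (∀ v : U, a z v + b l0 v = f v) ∧ (∀ μ : Λ, b μ z = 0) := by
    constructor
    · intro v
      rw [ha, ← hB, ← hFf, hFdec, inner_add_left]
      rw [ContinuousLinearMap.coe_coe]
      ring
    · intro μ
      rw [← hB]
      exact (Submodule.mem_orthogonal _ _).1 hzK (B μ) ⟨μ, rfl⟩
  -- Step 6: uniqueness.
  have huniq : ∀ p : U × Λ,
      ((∀ v : U, a p.1 v + b p.2 v = f v) ∧ (∀ μ : Λ, b μ p.1 = 0)) → p = (z, l0) := by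
    rintro ⟨u, l⟩ hp
    obtain ⟨hp1, hp2⟩ := hsol _ hp
    have hz1 : z + B l0 = F ∧ z ∈ Kᗮ := hsol (z, l0) hsol0
    have hdiff : u - z = B l0 - B l := by
      have := hz1.1
      rw [← hp1] at this
      rw [sub_eq_sub_iff_add_eq_add, ← this, add_comm]
    have hmemK : u - z ∈ K := by
      rw [hdiff, ← map_sub]
      exact ⟨l0 - l, rfl⟩
    have hmemKo : u - z ∈ Kᗮ := Kᗮ.sub_mem hp2 hz1.2
    have h0 : u - z = 0 := by
      have := (Submodule.mem_orthogonal _ _).1 hmemKo _ hmemK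
      rwa [inner_self_eq_zero] at this
    have hu : u = z := sub_eq_zero.1 h0
    have hBl : B l0 = B l := by
      rw [hu, sub_self] at hdiff
      exact (sub_eq_zero.1 hdiff.symm)
    have hl : l = l0 := by
      have : ‖B (l - l0)‖ = 0 := by rw [map_sub, hBl.symm]; simp
      rw [hBnorm] at this
      have := norm_eq_zero.1 this
      exact sub_eq_zero.1 this
    simp [hu, hl]
  refine ⟨⟨(z, l0), hsol0, huniq⟩, ?_⟩
  -- Step 7: the a-priori bound.
  rintro ⟨u, l⟩ hp
  obtain ⟨hp1, hp2⟩ := hsol _ hp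
  have horth : ⟪u, B l⟫ = 0 := by
    have := (Submodule.mem_orthogonal _ _).1 hp2 (B l) ⟨l, rfl⟩
    rwa [real_inner_comm] at this
  have hpyth : ‖F‖ ^ 2 = ‖u‖ ^ 2 + ‖B l‖ ^ 2 := by
    rw [← hp1, norm_add_sq_real, horth]
    ring
  have h1 : ‖u‖ ≤ ‖F‖ := by nlinarith [norm_nonneg u, norm_nonneg F, norm_nonneg (B l)]
  have h2 : ‖l‖ ≤ ‖F‖ := by
    rw [← hBnorm l]
    nlinarith [norm_nonneg u, norm_nonneg F, norm_nonneg (B l)]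
  rw [← hFnorm]
  simp only []
  linarith
end

section
/- In the setting of the Fortin criterion (a bounded coercive with constant α, boundedness constant ‖a‖; b bounded with constant ‖b‖ and discrete inf-sup constant γ_h > 0), let (u,λ) ∈ U × Λ solve the continuous mixed problem and (u_h,λ_h) ∈ U_h × Λ_h the discrete one with the same right-hand side functional. Then ‖u − u_h‖_U + ‖λ − λ_h‖_Λ ≤ C inf_{(v_h,μ_h)∈U_h×Λ_h} (‖u − v_h‖_U + ‖λ − μ_h‖_Λ), where C depends only on α, ‖a‖, ‖b‖, γ_h. -/
set_option maxHeartbeats 1000000 in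
/-- quasi-optimality for saddle point problems. Given constants
`α` (coercivity of `a`), `Ca = ‖a‖`, `Cb = ‖b‖` and a discrete inf-sup constant
`γh > 0`, there is `C > 0` depending only on `α, Ca, Cb, γh` such that for all
Hilbert spaces `U, Λ`, bilinear forms `a, b` with these constants, closed subspaces
`Uh ⊆ U`, `Λh ⊆ Λ` satisfying the discrete inf-sup condition with constant `γh`,
and solutions `(u,l)` of the continuous and `(uh,lh)` of the discrete mixed problem
with the same right-hand side `f`, one has
`‖u - uh‖ + ‖l - lh‖ ≤ C (‖u - vh‖ + ‖l - mh‖)` for all `vh ∈ Uh`, `mh ∈ Λh`. -/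
theorem stmt_14 (α Ca Cb γh : ℝ) (hα : 0 < α) (hγh : 0 < γh) :
    ∃ C > 0,
      ∀ (U Λ : Type)
        [NormedAddCommGroup U] [InnerProductSpace ℝ U] [CompleteSpace U]
        [NormedAddCommGroup Λ] [InnerProductSpace ℝ Λ] [CompleteSpace Λ]
        (a : U →ₗ[ℝ] U →ₗ[ℝ] ℝ) (b : Λ →ₗ[ℝ] U →ₗ[ℝ] ℝ),
        (∀ u v : U, |a u v| ≤ Ca * ‖u‖ * ‖v‖) →
        (∀ u : U, α * ‖u‖ ^ 2 ≤ a u u) →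
        (∀ (μ : Λ) (v : U), |b μ v| ≤ Cb * ‖μ‖ * ‖v‖) →
        ∀ (Uh : Submodule ℝ U) (Λh : Submodule ℝ Λ),
          IsClosed (Uh : Set U) → IsClosed (Λh : Set Λ) →
          (∀ lamh ∈ Λh, ∀ c : ℝ, c < γh * ‖lamh‖ →
            ∃ vh ∈ Uh, vh ≠ 0 ∧ c * ‖vh‖ < b lamh vh) →
          ∀ (f : U →L[ℝ] ℝ) (u uh : U) (l lh : Λ),
            uh ∈ Uh → lh ∈ Λh →
            (∀ v : U, a u v + b l v = f v) →
            (∀ μ : Λ, b μ u = 0) →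
            (∀ vh ∈ Uh, a uh vh + b lh vh = f vh) →
            (∀ mh ∈ Λh, b mh uh = 0) →
            ∀ vh ∈ Uh, ∀ mh ∈ Λh,
              ‖u - uh‖ + ‖l - lh‖ ≤ C * (‖u - vh‖ + ‖l - mh‖) := by
  obtain ⟨A, hAdef⟩ : ∃ A : ℝ, A = max Ca 1 := ⟨_, rfl⟩
  obtain ⟨B, hBdef⟩ : ∃ B : ℝ, B = max Cb 1 := ⟨_, rfl⟩
  have hA1 : (1:ℝ) ≤ A := hAdef ▸ le_max_right _ _
  have hB1 : (1:ℝ) ≤ B := hBdef ▸ le_max_right _ _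
  have hCaA : Ca ≤ A := hAdef ▸ le_max_left _ _
  have hCbB : Cb ≤ B := hBdef ▸ le_max_left _ _
  have hApos : (0:ℝ) < A := by linarith
  have hBpos : (0:ℝ) < B := by linarith
  obtain ⟨K, hKdef⟩ : ∃ K : ℝ, K = γh * (A + B) + 2 * A * B + B ^ 2 := ⟨_, rfl⟩
  have hKpos : 0 < K := by rw [hKdef]; nlinarith
  obtain ⟨C0, hC0def⟩ : ∃ C0 : ℝ, C0 = 1 + K / (γh * α) := ⟨_, rfl⟩
  have hC01 : (1:ℝ) ≤ C0 := by
    have h : 0 ≤ K / (γh * α) := le_of_lt (by positivity)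
    linarith [hC0def.ge, hC0def.le, h]
  obtain ⟨C, hCdef⟩ : ∃ C : ℝ, C = 2 + C0 + (A * (1 + C0) + B) / γh := ⟨_, rfl⟩
  have hCpos : 0 < C := by
    have h : 0 ≤ (A * (1 + C0) + B) / γh := le_of_lt (by positivity)
    linarith [hCdef.le, hCdef.ge, h]
  refine ⟨C, hCpos, ?_⟩
  intro U Λ _ _ _ _ _ _ a b ha hcoer hb Uh Λh _ _ hinfsup f u uh l lh huh hlh
    hcont hcker hdisc hdker vh hvh mh hmh
  set D := ‖u - vh‖ with hDdef
  set E := ‖l - mh‖ with hEdef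
  set X := ‖uh - vh‖ with hXdef
  set M := ‖lh - mh‖ with hMdef
  have hD0 : 0 ≤ D := norm_nonneg _
  have hE0 : 0 ≤ E := norm_nonneg _
  have hX0 : 0 ≤ X := norm_nonneg _
  have hM0 : 0 ≤ M := norm_nonneg _
  -- Galerkin orthogonality
  have hgal : ∀ wh ∈ Uh, a (u - uh) wh + b (l - lh) wh = 0 := by
    intro wh hwh
    have h1 := hcont wh
    have h2 := hdisc wh hwh
    simp only [map_sub, LinearMap.sub_apply]
    linarith
  -- triangle inequality for u - uh
  have htri1 : ‖u - uh‖ ≤ D + X := by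
    have he : u - uh = (u - vh) - (uh - vh) := by abel
    rw [he]
    exact norm_sub_le _ _
  -- inf-sup bound on M
  have hMs : γh * M ≤ Ca * ‖u - uh‖ + Cb * E := by
    by_contra hcon
    push_neg at hcon
    obtain ⟨wh, hwhU, -, hlt⟩ :=
      hinfsup (lh - mh) (Submodule.sub_mem _ hlh hmh) _ hcon
    have heq : b (lh - mh) wh = a (u - uh) wh + b (l - mh) wh := by
      have hg := hgal wh hwhU
      simp only [map_sub, LinearMap.sub_apply] at hg ⊢
      linarith
    have h1 : a (u - uh) wh ≤ Ca * ‖u - uh‖ * ‖wh‖ :=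
      (le_abs_self _).trans (ha _ _)
    have h2 : b (l - mh) wh ≤ Cb * E * ‖wh‖ :=
      (le_abs_self _).trans (hb _ _)
    linarith [hlt, heq, h1, h2]
  have hM2 : γh * M ≤ A * (D + X) + B * E := by
    have h1 : Ca * ‖u - uh‖ ≤ A * (D + X) := by
      have h2 : Ca * ‖u - uh‖ ≤ A * ‖u - uh‖ :=
        mul_le_mul_of_nonneg_right hCaA (norm_nonneg _)
      have h3 : A * ‖u - uh‖ ≤ A * (D + X) :=
        mul_le_mul_of_nonneg_left htri1 (le_of_lt hApos)
      linarith
    have h4 : Cb * E ≤ B * E := mul_le_mul_of_nonneg_right hCbB hE0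
    linarith
  -- coercivity identity
  have hkey : a (uh - vh) (uh - vh) =
      a (u - vh) (uh - vh) + b (l - mh) (uh - vh) + b (mh - lh) (u - vh) := by
    have hg := hgal (uh - vh) (Submodule.sub_mem _ huh hvh)
    have z1 := hdker mh hmh
    have z2 := hdker lh hlh
    have z3 := hcker mh
    have z4 := hcker lh
    simp only [map_sub, LinearMap.sub_apply] at hg ⊢
    linarith
  have hX2 : α * X ^ 2 ≤ A * (D * X) + B * (E * X) + B * (M * D) := by
    have h0 := hcoer (uh - vh)
    rw [hkey] at h0
    have h1 : a (u - vh) (uh - vh) ≤ Ca * D * X := (le_abs_self _).trans (ha _ _)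
    have h2 : b (l - mh) (uh - vh) ≤ Cb * E * X := (le_abs_self _).trans (hb _ _)
    have h3 : b (mh - lh) (u - vh) ≤ Cb * ‖mh - lh‖ * D := (le_abs_self _).trans (hb _ _)
    have hMrev : ‖mh - lh‖ = M := norm_sub_rev _ _
    rw [hMrev] at h3
    have hDX : 0 ≤ D * X := mul_nonneg hD0 hX0
    have hEX : 0 ≤ E * X := mul_nonneg hE0 hX0
    have hMD : 0 ≤ M * D := mul_nonneg hM0 hD0
    linarith [h0, h1, h2, h3, mul_le_mul_of_nonneg_right hCaA hDX,
      mul_le_mul_of_nonneg_right hCbB hEX, mul_le_mul_of_nonneg_right hCbB hMD]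
  set S := D + E with hSdef
  have hS0 : 0 ≤ S := by positivity
  have hDS : D ≤ S := by linarith
  have hES : E ≤ S := by linarith
  have hXS : X ≤ C0 * S := by
    rcases le_or_gt X S with h | h
    · have : S ≤ C0 * S := le_mul_of_one_le_left hS0 hC01
      linarith
    · have hXpos : 0 < X := lt_of_le_of_lt hS0 h
      have hDX : D ≤ X := by linarith
      have hSX : S ≤ X := le_of_lt h
      have hMD : γh * (M * D) ≤ (A * (D + X) + B * E) * D := by
        have h9 := mul_le_mul_of_nonneg_right hM2 hD0
        linarith [h9]
      have hMD' : B * (γh * (M * D)) ≤ B * ((A * (D + X) + B * E) * D) :=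
        mul_le_mul_of_nonneg_left hMD (le_of_lt hBpos)
      have hscaled : γh * (α * X ^ 2) ≤
          γh * (A * (D * X) + B * (E * X) + B * (M * D)) :=
        mul_le_mul_of_nonneg_left hX2 (le_of_lt hγh)
      have t1 : γh * A * (D * X) ≤ γh * A * (S * X) :=
        mul_le_mul_of_nonneg_left (mul_le_mul_of_nonneg_right hDS hX0) (by positivity)
      have t2 : γh * B * (E * X) ≤ γh * B * (S * X) :=
        mul_le_mul_of_nonneg_left (mul_le_mul_of_nonneg_right hES hX0) (by positivity)
      have t3 : A * B * (D * D) ≤ A * B * (S * X) :=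
        mul_le_mul_of_nonneg_left (mul_le_mul hDS hDX hD0 hS0) (by positivity)
      have t4 : A * B * (X * D) ≤ A * B * (S * X) := by
        rw [mul_comm X D]
        exact mul_le_mul_of_nonneg_left (mul_le_mul_of_nonneg_right hDS hX0)
          (by positivity)
      have t5 : B * B * (E * D) ≤ B * B * (S * X) :=
        mul_le_mul_of_nonneg_left (mul_le_mul hES hDX hD0 hS0) (by positivity)
      have hKSX : γh * α * X ^ 2 ≤ K * (S * X) := by
        rw [hKdef]; linarith [hscaled, hMD', t1, t2, t3, t4, t5]
      have h6 : γh * α * X ≤ K * S := by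
        by_contra hcon
        push_neg at hcon
        nlinarith [mul_lt_mul_of_pos_right hcon hXpos]
      have h7 : X ≤ K * S / (γh * α) := by
        rw [le_div_iff₀ (by positivity : (0:ℝ) < γh * α)]
        linarith [h6]
      have h8 : K * S / (γh * α) = K / (γh * α) * S := by ring
      have h9 : K / (γh * α) * S ≤ C0 * S := by
        have : K / (γh * α) ≤ C0 := by linarith [hC0def.ge]
        exact mul_le_mul_of_nonneg_right this hS0
      exact le_trans h7 (h8.le.trans h9)
  -- assemble
  have htri2 : ‖l - lh‖ ≤ E + M := by
    have he : l - lh = (l - mh) + (mh - lh) := by abel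
    rw [he]
    calc ‖(l - mh) + (mh - lh)‖ ≤ ‖l - mh‖ + ‖mh - lh‖ := norm_add_le _ _
    _ = E + M := by rw [norm_sub_rev mh lh]
  have hγC : γh * C = 2 * γh + γh * C0 + (A * (1 + C0) + B) := by
    rw [hCdef]
    field_simp
  have hfin : γh * (‖u - uh‖ + ‖l - lh‖) ≤ γh * (C * S) := by
    have e1 : γh * ‖u - uh‖ ≤ γh * (D + X) :=
      mul_le_mul_of_nonneg_left htri1 (le_of_lt hγh)
    have e2 : γh * ‖l - lh‖ ≤ γh * (E + M) :=
      mul_le_mul_of_nonneg_left htri2 (le_of_lt hγh)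
    have e3 : γh * X ≤ γh * (C0 * S) := mul_le_mul_of_nonneg_left hXS (le_of_lt hγh)
    have e4 : A * (D + X) ≤ A * (S + C0 * S) := by
      have : D + X ≤ S + C0 * S := by linarith
      exact mul_le_mul_of_nonneg_left this (le_of_lt hApos)
    have e5 : B * E ≤ B * S := mul_le_mul_of_nonneg_left hES (le_of_lt hBpos)
    have e6 : γh * (C * S) = (2 * γh + γh * C0 + (A * (1 + C0) + B)) * S := by
      rw [← hγC]; ring
    have e7 : γh * S = γh * D + γh * E := by rw [hSdef]; ring
    linarith [e1, e2, e3, e4, e5, hM2, e6, e7, mul_nonneg (le_of_lt hγh) hS0]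
  have := le_of_mul_le_mul_left hfin hγh
  linarith
end

section
/- Let T ⊂ R² be the reference triangle with vertices (0,0), (1,0), (0,1) and let F be its bottom edge. For 0 < ε < 1, let η_{F,ε}(x,y) = exp(−y/ε) x(1−x−y). For any w ∈ L²(T)² and any scalar g with ‖g‖_{L^∞(T)} ≤ M, the bound |⟨w, g ∇η_{F,ε}⟩_T| ≤ C M ε^{−1/2} ‖w‖_{L²(T)} holds with C independent of ε, w, g. -/
open MeasureTheory

lemma cont_proj0 : Continuous fun p : EuclideanSpace ℝ (Fin 2) => p 0 :=
  (EuclideanSpace.proj (0 : Fin 2) : EuclideanSpace ℝ (Fin 2) →L[ℝ] ℝ).continuous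

lemma cont_proj1 : Continuous fun p : EuclideanSpace ℝ (Fin 2) => p 1 :=
  (EuclideanSpace.proj (1 : Fin 2) : EuclideanSpace ℝ (Fin 2) →L[ℝ] ℝ).continuous

lemma coord_abs_le_norm (v : EuclideanSpace ℝ (Fin 2)) (i : Fin 2) : |v i| ≤ ‖v‖ := by
  rw [EuclideanSpace.norm_eq]
  calc |v i| = Real.sqrt (‖v i‖ ^ 2) := by
        rw [Real.sqrt_sq (norm_nonneg _), Real.norm_eq_abs]
    _ ≤ _ := Real.sqrt_le_sqrt (Finset.single_le_sum (f := fun j => ‖v j‖ ^ 2)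
        (fun j _ => by positivity) (Finset.mem_univ i))

lemma norm_gradient_expBubble_le {ε : ℝ} (hε : 0 < ε) (hε1 : ε < 1)
    {p : EuclideanSpace ℝ (Fin 2)} (hp : p ∈ refTriangle) :
    ‖gradient (expBubble ε) p‖ ≤ 4 / ε * Real.exp (-(p 1 / ε)) := by
  obtain ⟨hx0, hy0, hxy⟩ := hp
  set x := p 0 with hxdef
  set y := p 1 with hydef
  set e := Real.exp (-(y / ε)) with hedef
  have he : 0 < e := Real.exp_pos _
  have h0 : HasFDerivAt (𝕜 := ℝ) (fun q : EuclideanSpace ℝ (Fin 2) => q 0)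
      (EuclideanSpace.proj (0:Fin 2)) p :=
    (EuclideanSpace.proj (0:Fin 2) : EuclideanSpace ℝ (Fin 2) →L[ℝ] ℝ).hasFDerivAt
  have h1 : HasFDerivAt (𝕜 := ℝ) (fun q : EuclideanSpace ℝ (Fin 2) => q 1)
      (EuclideanSpace.proj (1:Fin 2)) p :=
    (EuclideanSpace.proj (1:Fin 2) : EuclideanSpace ℝ (Fin 2) →L[ℝ] ℝ).hasFDerivAt
  have h2 : HasFDerivAt (𝕜 := ℝ) (fun q : EuclideanSpace ℝ (Fin 2) => -(q 1 / ε))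
      ((-ε⁻¹) • EuclideanSpace.proj (1:Fin 2)) p := by
    have hfun : (fun q : EuclideanSpace ℝ (Fin 2) => -(q 1 / ε)) = fun q => (-ε⁻¹) * q 1 := by
      funext q; rw [div_eq_mul_inv]; ring
    rw [hfun]
    exact h1.const_mul _
  have hsum : HasFDerivAt (𝕜 := ℝ) (fun q : EuclideanSpace ℝ (Fin 2) => 1 - q 0 - q 1)
      ((0 : EuclideanSpace ℝ (Fin 2) →L[ℝ] ℝ) - EuclideanSpace.proj 0 - EuclideanSpace.proj 1) p :=
    ((hasFDerivAt_const (1:ℝ) p).sub h0).sub h1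
  have hL : HasFDerivAt (expBubble ε)
      (e • ((x) • ((0 : EuclideanSpace ℝ (Fin 2) →L[ℝ] ℝ) - EuclideanSpace.proj 0 - EuclideanSpace.proj 1)
          + (1 - x - y) • (EuclideanSpace.proj (0 : Fin 2)))
        + (x * (1 - x - y)) • (e • ((-ε⁻¹) • EuclideanSpace.proj (1 : Fin 2)))) p :=
    h2.exp.mul (h0.mul hsum)
  have hgrad : ‖gradient (expBubble ε) p‖ = ‖fderiv ℝ (expBubble ε) p‖ := by
    unfold gradient
    exact LinearIsometryEquiv.norm_map _ _
  rw [hgrad, hL.fderiv]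
  apply ContinuousLinearMap.opNorm_le_bound _ (by positivity)
  intro v
  have ha : |v 0| ≤ ‖v‖ := coord_abs_le_norm v 0
  have hb : |v 1| ≤ ‖v‖ := coord_abs_le_norm v 1
  have hn : (0:ℝ) ≤ ‖v‖ := norm_nonneg v
  set a := v 0
  set b := v 1
  set n := ‖v‖
  have happ : ((e • ((x) • ((0 : EuclideanSpace ℝ (Fin 2) →L[ℝ] ℝ) - EuclideanSpace.proj 0 - EuclideanSpace.proj 1)
          + (1 - x - y) • (EuclideanSpace.proj (0 : Fin 2)))
        + (x * (1 - x - y)) • (e • ((-ε⁻¹) • EuclideanSpace.proj (1 : Fin 2))) : EuclideanSpace ℝ (Fin 2) →L[ℝ] ℝ)) v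
      = e * ((x * (0 - a - b) + (1 - x - y) * a) + (x * (1 - x - y)) * (-ε⁻¹ * b)) := by
    simp [ContinuousLinearMap.add_apply, ContinuousLinearMap.smul_apply,
      ContinuousLinearMap.sub_apply, ContinuousLinearMap.zero_apply, smul_eq_mul]
    ring
  rw [Real.norm_eq_abs, happ]
  have hu1 : (1:ℝ) ≤ ε⁻¹ := (one_le_inv₀ hε).mpr hε1.le
  set u := ε⁻¹ with hudef
  have hu0 : 0 < u := by positivity
  have hQ : |(x * (0 - a - b) + (1 - x - y) * a) + (x * (1 - x - y)) * (-u * b)| ≤ 4 * u * n := by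
    have t1 : |a * (1 - 2*x - y)| ≤ n := by
      rw [abs_mul]
      calc |a| * |1 - 2*x - y| ≤ n * 1 :=
            mul_le_mul ha (abs_le.mpr ⟨by linarith, by linarith⟩) (abs_nonneg _) hn
        _ = n := mul_one n
    have t2 : |x * b| ≤ n := by
      rw [abs_mul]
      calc |x| * |b| ≤ 1 * n :=
            mul_le_mul (abs_le.mpr ⟨by linarith, by linarith⟩) hb (abs_nonneg _) one_pos.le
        _ = n := one_mul n
    have t3 : |x * (1 - x - y) * u * b| ≤ u * n := by
      rw [abs_mul, abs_mul, abs_mul]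
      have hxe : |x| ≤ 1 := abs_le.mpr ⟨by linarith, by linarith⟩
      have hse : |1 - x - y| ≤ 1 := abs_le.mpr ⟨by linarith, by linarith⟩
      have hue : |u| = u := abs_of_pos hu0
      calc |x| * |1 - x - y| * |u| * |b| ≤ 1 * 1 * u * n := by
            apply mul_le_mul (by
              apply mul_le_mul (by
                apply mul_le_mul hxe hse (abs_nonneg _) one_pos.le)
                (le_of_eq hue) (abs_nonneg _) (by norm_num)) hb (abs_nonneg _) (by positivity)
        _ = u * n := by ring
    have hrw : (x * (0 - a - b) + (1 - x - y) * a) + (x * (1 - x - y)) * (-u * b)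
        = a * (1 - 2*x - y) - x * b - x * (1 - x - y) * u * b := by ring
    rw [hrw]
    have hun : n ≤ u * n := le_mul_of_one_le_left hn hu1
    calc |a * (1 - 2*x - y) - x * b - x * (1 - x - y) * u * b|
        ≤ |a * (1 - 2*x - y) - x * b| + |x * (1 - x - y) * u * b| := abs_sub _ _
      _ ≤ |a * (1 - 2*x - y)| + |x * b| + |x * (1 - x - y) * u * b| := by
          have := abs_sub (a * (1 - 2*x - y)) (x * b)
          linarith
      _ ≤ 4 * u * n := by linarith
  calc |e * ((x * (0 - a - b) + (1 - x - y) * a) + (x * (1 - x - y)) * (-u * b))|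
      = e * |(x * (0 - a - b) + (1 - x - y) * a) + (x * (1 - x - y)) * (-u * b)| := by
        rw [abs_mul, abs_of_pos he]
    _ ≤ e * (4 * u * n) := mul_le_mul_of_nonneg_left hQ he.le
    _ = 4 / ε * e * n := by rw [hudef, div_eq_mul_inv]; ring

lemma volume_lt_top_of_coords {s : Set (EuclideanSpace ℝ (Fin 2))}
    (h : ∀ p ∈ s, |p 0| ≤ 1 ∧ |p 1| ≤ 1) : volume s < ⊤ := by
  have hsub : s ⊆ Metric.closedBall 0 2 := by
    intro p hp
    rw [Metric.mem_closedBall, dist_zero_right, EuclideanSpace.norm_eq]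
    obtain ⟨h1, h2⟩ := h p hp
    rw [Fin.sum_univ_two]
    have h4 : ‖p 0‖ ^ 2 + ‖p 1‖ ^ 2 ≤ 4 := by
      simp only [Real.norm_eq_abs]
      nlinarith [abs_nonneg (p 0), abs_nonneg (p 1)]
    calc Real.sqrt (‖p 0‖ ^ 2 + ‖p 1‖ ^ 2) ≤ Real.sqrt 4 := Real.sqrt_le_sqrt h4
      _ = 2 := by
        rw [show (4:ℝ) = 2 ^ 2 by norm_num, Real.sqrt_sq (by norm_num : (0:ℝ) ≤ 2)]
  exact lt_of_le_of_lt (measure_mono hsub) measure_closedBall_lt_top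

lemma integral_exp_sq_le {ε : ℝ} (hε : 0 < ε) :
    ∫ x in refTriangle, Real.exp (-(x 1 / ε)) ^ 2 ≤ ε / 2 := by
  have hεne : ε ≠ 0 := ne_of_gt hε
  set c : ℝ := -2 / ε with hcdef
  have hc : c < 0 := div_neg_of_neg_of_pos (by norm_num) hε
  have hsq : ∀ x : EuclideanSpace ℝ (Fin 2),
      Real.exp (-(x 1 / ε)) ^ 2 = Real.exp (c * x 1) := by
    intro x
    rw [← Real.exp_nat_mul]
    congr 1
    rw [hcdef]
    push_cast
    field_simp
  simp_rw [hsq]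
  set S : Set (EuclideanSpace ℝ (Fin 2)) :=
    {p | p 0 ∈ Set.Icc (0:ℝ) 1 ∧ p 1 ∈ Set.Icc (0:ℝ) 1} with hSdef
  have hSclosed : IsClosed S :=
    (isClosed_Icc.preimage cont_proj0).inter (isClosed_Icc.preimage cont_proj1)
  have hcont : Continuous fun x : EuclideanSpace ℝ (Fin 2) => Real.exp (c * x 1) :=
    Real.continuous_exp.comp (continuous_const.mul cont_proj1)
  have hSfin : volume S < ⊤ := by
    apply volume_lt_top_of_coords
    rintro p ⟨⟨ha, hb⟩, hc', hd⟩
    exact ⟨abs_le.mpr ⟨by linarith, by linarith⟩, abs_le.mpr ⟨by linarith, by linarith⟩⟩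
  have hIntS : IntegrableOn (fun x : EuclideanSpace ℝ (Fin 2) => Real.exp (c * x 1)) S volume := by
    apply Measure.integrableOn_of_bounded hSfin.ne hcont.aestronglyMeasurable (M := 1)
    filter_upwards [ae_restrict_mem hSclosed.measurableSet] with x hx
    rw [Real.norm_eq_abs, abs_of_pos (Real.exp_pos _), Real.exp_le_one_iff]
    exact mul_nonpos_of_nonpos_of_nonneg hc.le hx.2.1
  have hsub : refTriangle ⊆ S := by
    rintro p ⟨h1, h2, h3⟩
    exact ⟨⟨h1, by linarith⟩, ⟨h2, by linarith⟩⟩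
  have hmono : ∫ x in refTriangle, Real.exp (c * x 1) ≤ ∫ x in S, Real.exp (c * x 1) := by
    apply setIntegral_mono_set hIntS
    · filter_upwards with x using (Real.exp_pos _).le
    · exact HasSubset.Subset.eventuallyLE hsub
  refine hmono.trans ?_
  set ψ : EuclideanSpace ℝ (Fin 2) ≃ᵐ ℝ × ℝ :=
    (MeasurableEquiv.toLp 2 (Fin 2 → ℝ)).symm.trans (MeasurableEquiv.piFinTwo fun _ => ℝ)
      with hψdef
  have hψ : MeasurePreserving ψ volume volume := by
    rw [hψdef, MeasurableEquiv.coe_trans]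
    exact (volume_preserving_piFinTwo fun _ => ℝ).comp
      (EuclideanSpace.volume_preserving_symm_measurableEquiv_toLp (Fin 2))
  have hSpre : S = ψ ⁻¹' (Set.Icc (0:ℝ) 1 ×ˢ Set.Icc (0:ℝ) 1) := by ext p; rfl
  have hpre : ∫ x in S, Real.exp (c * x 1)
      = ∫ z in (Set.Icc (0:ℝ) 1 ×ˢ Set.Icc (0:ℝ) 1), Real.exp (c * z.2) := by
    rw [hSpre]
    exact hψ.setIntegral_preimage_emb ψ.measurableEmbedding (fun z => Real.exp (c * z.2)) _
  rw [hpre]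
  have hprod : ∫ z in (Set.Icc (0:ℝ) 1 ×ˢ Set.Icc (0:ℝ) 1), Real.exp (c * z.2)
      = (∫ _t in Set.Icc (0:ℝ) 1, (1:ℝ)) * ∫ t in Set.Icc (0:ℝ) 1, Real.exp (c * t) := by
    rw [Measure.volume_eq_prod]
    rw [← setIntegral_prod_mul (fun _ => (1:ℝ)) (fun t => Real.exp (c * t))]
    simp
  rw [hprod]
  have h1 : (∫ _t in Set.Icc (0:ℝ) 1, (1:ℝ)) = 1 := by
    simp [Real.volume_Icc]
  rw [h1, one_mul]
  have hIcc : ∫ t in Set.Icc (0:ℝ) 1, Real.exp (c * t)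
      = ∫ t in (0:ℝ)..1, Real.exp (c * t) := by
    rw [MeasureTheory.integral_Icc_eq_integral_Ioc,
      intervalIntegral.integral_of_le (by norm_num : (0:ℝ) ≤ 1)]
  rw [hIcc]
  have hftc : ∫ t in (0:ℝ)..1, Real.exp (c * t)
      = Real.exp (c * 1) / c - Real.exp (c * 0) / c := by
    apply intervalIntegral.integral_eq_sub_of_hasDerivAt (f := fun t => Real.exp (c * t) / c)
    · intro t _
      have h := (((hasDerivAt_id t).const_mul c).exp).div_const c
      convert h using 1
      case e'_4 => rfl
      case e'_8 => rfl
      field_simp [hc.ne]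
      rfl
    · exact (Real.continuous_exp.comp (continuous_const.mul continuous_id)).intervalIntegrable 0 1
  rw [hftc]
  have hval : Real.exp (c * 1) / c - Real.exp (c * 0) / c = (Real.exp c - 1) / c := by
    rw [mul_one, mul_zero, Real.exp_zero, div_sub_div_same]
  rw [hval, div_le_iff_of_neg hc]
  have hmul : ε / 2 * c = -1 := by
    rw [hcdef]; field_simp
  rw [hmul]
  linarith [Real.exp_pos c]

/-- for any `w ∈ L²(T)²` and any scalar function `g` with
`‖g‖_{L^∞(T)} ≤ M`, `|⟨w, g ∇η_{F,ε}⟩_T| ≤ C M ε^{-1/2} ‖w‖_{L²(T)}` with `C`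
independent of `ε`, `w`, `g`. -/
theorem stmt_16 :
    ∃ C > 0, ∀ ε : ℝ, 0 < ε → ε < 1 →
      ∀ (w : EuclideanSpace ℝ (Fin 2) → EuclideanSpace ℝ (Fin 2))
        (g : EuclideanSpace ℝ (Fin 2) → ℝ) (M : ℝ), 0 ≤ M →
        MemLp w 2 (volume.restrict refTriangle) →
        AEStronglyMeasurable g (volume.restrict refTriangle) →
        (∀ x ∈ refTriangle, |g x| ≤ M) →
        |∫ x in refTriangle, (inner ℝ (w x) (g x • gradient (expBubble ε) x) : ℝ)| ≤
          C * M / Real.sqrt ε * Real.sqrt (∫ x in refTriangle, ‖w x‖ ^ 2) := by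
  refine ⟨4, by norm_num, ?_⟩
  intro ε hε hε1 w g M hM hw hg hgM
  have hTclosed : IsClosed refTriangle := by
    have hrw : refTriangle
        = {p : EuclideanSpace ℝ (Fin 2) | 0 ≤ p 0}
          ∩ ({p | 0 ≤ p 1} ∩ {p | p 0 + p 1 ≤ 1}) := rfl
    rw [hrw]
    exact (isClosed_le continuous_const cont_proj0).inter
      ((isClosed_le continuous_const cont_proj1).inter
        (isClosed_le (cont_proj0.add cont_proj1) continuous_const))
  have hTmeas : MeasurableSet refTriangle := hTclosed.measurableSet
  have hTfin : volume refTriangle < ⊤ := by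
    apply volume_lt_top_of_coords
    rintro p ⟨h1, h2, h3⟩
    exact ⟨abs_le.mpr ⟨by linarith, by linarith⟩, abs_le.mpr ⟨by linarith, by linarith⟩⟩
  haveI : IsFiniteMeasure (volume.restrict refTriangle) :=
    ⟨by rwa [Measure.restrict_apply_univ]⟩
  set Ef : EuclideanSpace ℝ (Fin 2) → ℝ := fun x => Real.exp (-(x 1 / ε)) with hEf
  have hEcont : Continuous Ef :=
    Real.continuous_exp.comp ((cont_proj1.div_const ε).neg)
  have hwInt : Integrable (fun x => ‖w x‖) (volume.restrict refTriangle) :=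
    (hw.integrable (by norm_num)).norm
  have hprodInt : Integrable (fun x => Ef x * ‖w x‖) (volume.restrict refTriangle) := by
    have hAES : AEStronglyMeasurable (fun x => Ef x * ‖w x‖) (volume.restrict refTriangle) :=
      hEcont.aestronglyMeasurable.mul hw.1.norm
    apply Integrable.mono' hwInt hAES
    filter_upwards [ae_restrict_mem hTmeas] with x hx
    rw [Real.norm_eq_abs, abs_mul, abs_of_pos (Real.exp_pos _), abs_norm]
    apply mul_le_of_le_one_left (norm_nonneg _)
    rw [Real.exp_le_one_iff]
    have : 0 ≤ x 1 := hx.2.1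
    have hd : 0 ≤ x 1 / ε := div_nonneg this hε.le
    linarith
  have step1 : |∫ x in refTriangle, (inner ℝ (w x) (g x • gradient (expBubble ε) x) : ℝ)|
      ≤ ∫ x in refTriangle, 4 * M / ε * (Ef x * ‖w x‖) := by
    rw [← Real.norm_eq_abs]
    refine (norm_integral_le_integral_norm _).trans ?_
    apply integral_mono_of_nonneg
    · filter_upwards with x using norm_nonneg _
    · exact hprodInt.const_mul _
    · filter_upwards [ae_restrict_mem hTmeas] with x hx
      calc ‖(inner ℝ (w x) (g x • gradient (expBubble ε) x) : ℝ)‖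
          ≤ ‖w x‖ * ‖g x • gradient (expBubble ε) x‖ := norm_inner_le_norm _ _
        _ = ‖w x‖ * (|g x| * ‖gradient (expBubble ε) x‖) := by
            rw [norm_smul, Real.norm_eq_abs]
        _ ≤ ‖w x‖ * (M * (4 / ε * Ef x)) := by
            apply mul_le_mul_of_nonneg_left _ (norm_nonneg _)
            exact mul_le_mul (hgM x hx) (norm_gradient_expBubble_le hε hε1 hx)
              (norm_nonneg _) hM
        _ = 4 * M / ε * (Ef x * ‖w x‖) := by ring
  have step2 : ∫ x in refTriangle, 4 * M / ε * (Ef x * ‖w x‖)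
      = 4 * M / ε * ∫ x in refTriangle, Ef x * ‖w x‖ := integral_const_mul _ _
  have h2 : ENNReal.ofReal (2:ℝ) = 2 := by norm_num
  have hwmem : MemLp (fun x => ‖w x‖) (ENNReal.ofReal 2) (volume.restrict refTriangle) := by
    rw [h2]; exact hw.norm
  have hEmem : MemLp Ef (ENNReal.ofReal 2) (volume.restrict refTriangle) := by
    rw [h2]
    refine MemLp.mono_exponent ?_ le_top
    apply memLp_top_of_bound hEcont.aestronglyMeasurable 1
    filter_upwards [ae_restrict_mem hTmeas] with x hx
    rw [Real.norm_eq_abs, abs_of_pos (Real.exp_pos _), Real.exp_le_one_iff]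
    have : 0 ≤ x 1 := hx.2.1
    have hd : 0 ≤ x 1 / ε := div_nonneg this hε.le
    linarith
  have hCS : ∫ x in refTriangle, Ef x * ‖w x‖
      ≤ (∫ x in refTriangle, Ef x ^ (2:ℝ)) ^ (1/2:ℝ)
        * (∫ x in refTriangle, ‖w x‖ ^ (2:ℝ)) ^ (1/2:ℝ) := by
    apply integral_mul_le_Lp_mul_Lq_of_nonneg Real.HolderConjugate.two_two _ _ hEmem hwmem
    · filter_upwards with x using (Real.exp_pos _).le
    · filter_upwards with x using norm_nonneg _
  have hrw1 : ∫ x in refTriangle, Ef x ^ (2:ℝ) = ∫ x in refTriangle, Ef x ^ 2 := by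
    apply integral_congr_ae
    filter_upwards with x
    rw [show (2:ℝ) = ((2:ℕ):ℝ) by norm_num, Real.rpow_natCast]
  have hrw2 : ∫ x in refTriangle, ‖w x‖ ^ (2:ℝ) = ∫ x in refTriangle, ‖w x‖ ^ 2 := by
    apply integral_congr_ae
    filter_upwards with x
    rw [show (2:ℝ) = ((2:ℕ):ℝ) by norm_num, Real.rpow_natCast]
  set W : ℝ := Real.sqrt (∫ x in refTriangle, ‖w x‖ ^ 2) with hWdef
  have hW0 : 0 ≤ W := Real.sqrt_nonneg _
  have hWeq : (∫ x in refTriangle, ‖w x‖ ^ (2:ℝ)) ^ (1/2:ℝ) = W := by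
    rw [hrw2, hWdef, Real.sqrt_eq_rpow]
  have hE12 : (∫ x in refTriangle, Ef x ^ (2:ℝ)) ^ (1/2:ℝ) ≤ Real.sqrt ε := by
    rw [hrw1, ← Real.sqrt_eq_rpow]
    refine (Real.sqrt_le_sqrt (integral_exp_sq_le hε)).trans (Real.sqrt_le_sqrt (by linarith))
  have hCS2 : ∫ x in refTriangle, Ef x * ‖w x‖ ≤ Real.sqrt ε * W := by
    refine hCS.trans ?_
    rw [hWeq]
    exact mul_le_mul_of_nonneg_right hE12 hW0
  have hsε : 0 < Real.sqrt ε := Real.sqrt_pos.mpr hε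
  have hss : Real.sqrt ε * Real.sqrt ε = ε := Real.mul_self_sqrt hε.le
  have hfinal : 4 * M / ε * (Real.sqrt ε * W) = 4 * M / Real.sqrt ε * W := by
    rw [div_mul_eq_mul_div, div_mul_eq_mul_div, div_eq_div_iff (ne_of_gt hε) (ne_of_gt hsε)]
    linear_combination 4 * M * W * hss
  calc |∫ x in refTriangle, (inner ℝ (w x) (g x • gradient (expBubble ε) x) : ℝ)|
      ≤ ∫ x in refTriangle, 4 * M / ε * (Ef x * ‖w x‖) := step1
    _ = 4 * M / ε * ∫ x in refTriangle, Ef x * ‖w x‖ := step2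
    _ ≤ 4 * M / ε * (Real.sqrt ε * W) := by
        apply mul_le_mul_of_nonneg_left hCS2 (by positivity)
    _ = 4 * M / Real.sqrt ε * W := hfinal
end
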